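/- arXiv:2304.13251 — 2 statements merged into one kernel-verified Lean document; each statement's English description precedes it below -/
import Mathlib

section
/- Let 0 < ρ₁ < r < ρ₂, let A = {x ∈ ℝ² : ρ₁ < |x| < ρ₂}, let Y ≠ 0 and ν be real constants, and let μ₁, μ₂ : A → ℝ be C³ and σ̄ : A → ℝ be C² with σ̄ = −(1/2) ∂μ₁/∂x = −(1/2) ∂μ₂/∂y and ∂μ₁/∂y + ∂μ₂/∂x = 0 on A. Set ε̄ = (1−2ν)(1+ν) σ̄ / Y and k = −(1−2ν)(1+ν)/(2Y), fix X = (X₁, X₂) ∈ ℝ², and parametrize the circle of radius r by γ(θ) = (r cos θ, r sin θ), θ ∈ [0, 2π]. Then ∫₀^{2π} (X₂ − r sin θ) [ (∂ε̄/∂y)(γ(θ)) (−r sin θ) − (∂ε̄/∂x)(γ(θ)) (r cos θ) ] dθ = k ∫₀^{2π} (∂μ₁/∂y)(γ(θ)) (r cos θ) dθ. -/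
open Real

/-- Partial derivative in the `x` direction of a function on `ℝ²`. -/
noncomputable def pdx (f : ℝ × ℝ → ℝ) : ℝ × ℝ → ℝ := fun p => fderiv ℝ f p (1, 0)

/-- Partial derivative in the `y` direction of a function on `ℝ²`. -/
noncomputable def pdy (f : ℝ × ℝ → ℝ) : ℝ × ℝ → ℝ := fun p => fderiv ℝ f p (0, 1)

/-- Eq. (F2fin) in the proof of the planar trace principle: for a trace-energy stationary
point with Lagrange multiplier `μ` satisfying `σ̄ I = −(1/2)∇ₛμ` on an annulus, the loop
integral `∮ (X₂ − x₂)(ε̄,₂ dx₁ − ε̄,₁ dx₂)` around a circle enclosing the hole reduces to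
`k ∮ μ₁,₂ dx₂`. -/
theorem stmt_11 (ρ₁ ρ₂ r : ℝ) (h1 : 0 < ρ₁) (h2 : ρ₁ < r) (h3 : r < ρ₂)
    (A : Set (ℝ × ℝ))
    (hA : A = {p : ℝ × ℝ | ρ₁ ^ 2 < p.1 ^ 2 + p.2 ^ 2 ∧ p.1 ^ 2 + p.2 ^ 2 < ρ₂ ^ 2})
    (Y ν : ℝ) (hY : Y ≠ 0)
    (μ₁ μ₂ : ℝ × ℝ → ℝ) (hμ₁ : ContDiffOn ℝ 3 μ₁ A) (hμ₂ : ContDiffOn ℝ 3 μ₂ A)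
    (σbar : ℝ × ℝ → ℝ) (hσ : ContDiffOn ℝ 2 σbar A)
    (hm1 : ∀ p ∈ A, σbar p = -(1 / 2) * pdx μ₁ p)
    (hm2 : ∀ p ∈ A, σbar p = -(1 / 2) * pdy μ₂ p)
    (hm3 : ∀ p ∈ A, pdy μ₁ p + pdx μ₂ p = 0)
    (εbar : ℝ × ℝ → ℝ)
    (hεbar : ∀ p, εbar p = (1 - 2 * ν) * (1 + ν) * σbar p / Y)
    (k : ℝ) (hk : k = -((1 - 2 * ν) * (1 + ν)) / (2 * Y))
    (X : ℝ × ℝ)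
    (γ : ℝ → ℝ × ℝ) (hγ : ∀ θ, γ θ = (r * Real.cos θ, r * Real.sin θ)) :
    ∫ θ in (0:ℝ)..(2 * π),
        (X.2 - r * Real.sin θ) *
          (pdy εbar (γ θ) * (-(r * Real.sin θ)) - pdx εbar (γ θ) * (r * Real.cos θ)) =
      k * ∫ θ in (0:ℝ)..(2 * π), pdy μ₁ (γ θ) * (r * Real.cos θ) := by
  have hAopen : IsOpen A := by
    rw [hA]
    have : Continuous fun p : ℝ × ℝ => p.1 ^ 2 + p.2 ^ 2 := by fun_prop
    exact (isOpen_lt continuous_const this).inter (isOpen_lt this continuous_const)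
  have hr0 : 0 < r := h1.trans h2
  have hγA : ∀ θ, γ θ ∈ A := by
    intro θ
    rw [hγ, hA]
    have hs := Real.sin_sq_add_cos_sq θ
    have hsq : (r * Real.cos θ) ^ 2 + (r * Real.sin θ) ^ 2 = r ^ 2 := by
      have : (r * Real.cos θ) ^ 2 + (r * Real.sin θ) ^ 2
          = r ^ 2 * (Real.sin θ ^ 2 + Real.cos θ ^ 2) := by ring
      rw [this, hs, mul_one]
    refine ⟨?_, ?_⟩ <;> simp only [Set.mem_setOf_eq] <;> rw [hsq] <;> nlinarith
  set c : ℝ := (1 - 2 * ν) * (1 + ν) / Y with hc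
  have hkc : k = -(c / 2) := by rw [hk, hc]; ring
  have hεb : εbar = fun p => c * σbar p := by
    funext p; rw [hεbar p, hc]; ring
  -- second derivative of μ₁
  set D2 : ℝ × ℝ → (ℝ × ℝ) →L[ℝ] (ℝ × ℝ) →L[ℝ] ℝ := fderiv ℝ (fderiv ℝ μ₁) with hD2
  -- evaluation derivative helper
  have heval : ∀ (v : ℝ × ℝ) (f : ℝ × ℝ → ℝ) (p : ℝ × ℝ), DifferentiableAt ℝ (fderiv ℝ f) p →
      HasFDerivAt (fun q => fderiv ℝ f q v)
        ((ContinuousLinearMap.apply ℝ ℝ v).comp (fderiv ℝ (fderiv ℝ f) p)) p := by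
    intro v f p hdf
    exact (ContinuousLinearMap.apply ℝ ℝ v).hasFDerivAt.comp p hdf.hasFDerivAt
  have key : ∀ p ∈ A,
      pdy εbar p = k * (D2 p (1, 0) (0, 1)) ∧ pdx εbar p = -k * (D2 p (0, 1) (0, 1)) := by
    intro p hp
    have hmem := hAopen.mem_nhds hp
    have hc1 : ContDiffAt ℝ 3 μ₁ p := hμ₁.contDiffAt hmem
    have hc2 : ContDiffAt ℝ 3 μ₂ p := hμ₂.contDiffAt hmem
    have hf1 : ContDiffAt ℝ 2 (fderiv ℝ μ₁) p := hc1.fderiv_right (by norm_num)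
    have hf2 : ContDiffAt ℝ 2 (fderiv ℝ μ₂) p := hc2.fderiv_right (by norm_num)
    have hd1 : DifferentiableAt ℝ (fderiv ℝ μ₁) p := hf1.differentiableAt (by norm_num)
    have hd2 : DifferentiableAt ℝ (fderiv ℝ μ₂) p := hf2.differentiableAt (by norm_num)
    constructor
    · have hloc : εbar =ᶠ[nhds p] fun q => (-(c / 2)) * fderiv ℝ μ₁ q (1, 0) := by
        filter_upwards [hmem] with q hq
        rw [hεb]
        simp only [hm1 q hq, pdx]; ring
      have h1' : fderiv ℝ εbar p = fderiv ℝ (fun q => (-(c / 2)) * fderiv ℝ μ₁ q (1, 0)) p :=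
        hloc.fderiv_eq
      have h2' : fderiv ℝ (fun q => (-(c / 2)) * fderiv ℝ μ₁ q (1, 0)) p
          = (-(c / 2)) • ((ContinuousLinearMap.apply ℝ ℝ (1, 0)).comp (D2 p)) :=
        ((heval (1, 0) μ₁ p hd1).const_smul (-(c / 2))).fderiv
      have hsym := hc1.isSymmSndFDerivAt (by norm_num)
      rw [pdy, h1', h2', hkc]
      simp only [ContinuousLinearMap.coe_smul', Pi.smul_apply,
        ContinuousLinearMap.coe_comp', Function.comp_apply, ContinuousLinearMap.apply_apply,
        smul_eq_mul]
      rw [hD2, hsym (0, 1) (1, 0)]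
    · have hloc : εbar =ᶠ[nhds p] fun q => (-(c / 2)) * fderiv ℝ μ₂ q (0, 1) := by
        filter_upwards [hmem] with q hq
        rw [hεb]
        simp only [hm2 q hq, pdy]; ring
      have h1' : fderiv ℝ εbar p = fderiv ℝ (fun q => (-(c / 2)) * fderiv ℝ μ₂ q (0, 1)) p :=
        hloc.fderiv_eq
      have h2' : fderiv ℝ (fun q => (-(c / 2)) * fderiv ℝ μ₂ q (0, 1)) p
          = (-(c / 2)) • ((ContinuousLinearMap.apply ℝ ℝ (0, 1)).comp (fderiv ℝ (fderiv ℝ μ₂) p)) :=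
        ((heval (0, 1) μ₂ p hd2).const_smul (-(c / 2))).fderiv
      have hsym2 := hc2.isSymmSndFDerivAt (by norm_num)
      have hloc2 : (fun q => fderiv ℝ μ₂ q (1, 0)) =ᶠ[nhds p]
          fun q => -(fderiv ℝ μ₁ q (0, 1)) := by
        filter_upwards [hmem] with q hq
        have h := hm3 q hq
        simp only [pdx, pdy] at h
        linarith
      have heq2 : fderiv ℝ (fderiv ℝ μ₂) p (0, 1) (1, 0) = -(D2 p (0, 1) (0, 1)) := by
        have e1 : fderiv ℝ (fun q => fderiv ℝ μ₂ q (1, 0)) p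
            = fderiv ℝ (fun q => -(fderiv ℝ μ₁ q (0, 1))) p := hloc2.fderiv_eq
        have e2 := (heval (1, 0) μ₂ p hd2).fderiv
        have e3 : fderiv ℝ (fun q => -(fderiv ℝ μ₁ q (0, 1))) p
            = -((ContinuousLinearMap.apply ℝ ℝ (0, 1)).comp (D2 p)) :=
          (heval (0, 1) μ₁ p hd1).neg.fderiv
        have e4 := e2.symm.trans (e1.trans e3)
        have h4 := congrArg (fun L : (ℝ × ℝ) →L[ℝ] ℝ => L (0, 1)) e4
        simpa [hsym2 (0, 1) (1, 0)] using h4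
      rw [pdx, h1', h2', hkc]
      simp only [ContinuousLinearMap.coe_smul', Pi.smul_apply,
        ContinuousLinearMap.coe_comp', Function.comp_apply, ContinuousLinearMap.apply_apply,
        smul_eq_mul]
      rw [hsym2 (1, 0) (0, 1), heq2]
      ring
  -- curve quantities
  set G : ℝ → ℝ := fun θ => fderiv ℝ μ₁ (γ θ) (0, 1) with hG
  have hGpdy : ∀ θ, pdy μ₁ (γ θ) = G θ := fun θ => rfl
  set a : ℝ → ℝ := fun θ => D2 (γ θ) (1, 0) (0, 1) with ha
  set b : ℝ → ℝ := fun θ => D2 (γ θ) (0, 1) (0, 1) with hb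
  set F : ℝ → ℝ := fun θ => (X.2 - r * Real.sin θ) * G θ with hF
  set F' : ℝ → ℝ := fun θ => -(r * Real.cos θ) * G θ +
      (X.2 - r * Real.sin θ) * ((-(r * Real.sin θ)) * a θ + (r * Real.cos θ) * b θ) with hF'
  -- derivative of the curve
  have hγd : ∀ θ, HasDerivAt γ (-(r * Real.sin θ), r * Real.cos θ) θ := by
    intro θ
    have hγeq : γ = fun θ => ((r * Real.cos θ, r * Real.sin θ) : ℝ × ℝ) := funext hγ
    rw [hγeq]
    exact (((Real.hasDerivAt_cos θ).const_mul r).prodMk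
      ((Real.hasDerivAt_sin θ).const_mul r)).congr_deriv
      (by rw [Prod.mk.injEq]; exact ⟨by ring, rfl⟩)
  have hGd : ∀ θ, HasDerivAt G ((-(r * Real.sin θ)) * a θ + (r * Real.cos θ) * b θ) θ := by
    intro θ
    have hmem := hAopen.mem_nhds (hγA θ)
    have hd1 : DifferentiableAt ℝ (fderiv ℝ μ₁) (γ θ) :=
      ((hμ₁.contDiffAt hmem).fderiv_right (m := 2) (by norm_num)).differentiableAt (by norm_num)
    have hL := heval (0, 1) μ₁ (γ θ) hd1
    have hthis := hL.comp_hasDerivAt θ (hγd θ)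
    have hvec : ((-(r * Real.sin θ), r * Real.cos θ) : ℝ × ℝ)
        = (-(r * Real.sin θ)) • ((1, 0) : ℝ × ℝ) + (r * Real.cos θ) • ((0, 1) : ℝ × ℝ) := by
      simp [Prod.ext_iff]
    have h5 : ((ContinuousLinearMap.apply ℝ ℝ ((0, 1) : ℝ × ℝ)).comp
        (fderiv ℝ (fderiv ℝ μ₁) (γ θ))) (-(r * Real.sin θ), r * Real.cos θ)
        = (-(r * Real.sin θ)) * a θ + (r * Real.cos θ) * b θ := by
      rw [hvec]
      simp only [ContinuousLinearMap.coe_comp', Function.comp_apply, map_add, map_smul,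
        ContinuousLinearMap.apply_apply, ContinuousLinearMap.add_apply,
        ContinuousLinearMap.coe_smul', Pi.smul_apply, smul_eq_mul, ha, hb, hD2]
    exact hthis.congr_deriv h5
  have hFd : ∀ θ, HasDerivAt F (F' θ) θ := by
    intro θ
    have h1' : HasDerivAt (fun θ => X.2 - r * Real.sin θ) (-(r * Real.cos θ)) θ := by
      simpa using ((Real.hasDerivAt_sin θ).const_mul r).const_sub X.2
    exact h1'.mul (hGd θ)
  -- continuity facts
  have hγcont : Continuous γ := by
    have hγeq : γ = fun θ => ((r * Real.cos θ, r * Real.sin θ) : ℝ × ℝ) := funext hγ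
    rw [hγeq]; fun_prop
  have hD2cont : ContinuousOn D2 A := by
    rw [hD2]
    exact ((hμ₁.fderiv_of_isOpen (m := 2) hAopen (by norm_num)).fderiv_of_isOpen (m := 1)
      hAopen (by norm_num)).continuousOn
  have hD2γ : Continuous fun θ => D2 (γ θ) := hD2cont.comp_continuous hγcont hγA
  have hacont : Continuous a := by
    rw [ha]
    exact (hD2γ.clm_apply continuous_const).clm_apply continuous_const
  have hbcont : Continuous b := by
    rw [hb]
    exact (hD2γ.clm_apply continuous_const).clm_apply continuous_const
  have hGcont : Continuous G := by
    have h1' : ContinuousOn (fderiv ℝ μ₁) A := by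
      have := hμ₁.fderiv_of_isOpen (m := 2) hAopen (by norm_num)
      exact this.continuousOn
    have h2' : Continuous fun θ => fderiv ℝ μ₁ (γ θ) := h1'.comp_continuous hγcont hγA
    exact h2'.clm_apply continuous_const
  have hF'cont : Continuous F' := by
    rw [hF']; fun_prop
  -- integrand identity
  have hinteq : ∀ θ, (X.2 - r * Real.sin θ) *
      (pdy εbar (γ θ) * (-(r * Real.sin θ)) - pdx εbar (γ θ) * (r * Real.cos θ))
      = k * F' θ + k * (pdy μ₁ (γ θ) * (r * Real.cos θ)) := by
    intro θ
    obtain ⟨k1, k2⟩ := key (γ θ) (hγA θ)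
    rw [k1, k2, hGpdy θ]
    simp only [hF']
    ring
  -- put it together
  have hi1 : IntervalIntegrable (fun θ => k * F' θ) MeasureTheory.volume 0 (2 * π) :=
    (continuous_const.mul hF'cont).intervalIntegrable 0 (2 * π)
  have hi2 : IntervalIntegrable (fun θ => k * (pdy μ₁ (γ θ) * (r * Real.cos θ)))
      MeasureTheory.volume 0 (2 * π) := by
    have : Continuous fun θ => k * (G θ * (r * Real.cos θ)) := by fun_prop
    exact this.intervalIntegrable 0 (2 * π)
  have hstep1 : (∫ θ in (0:ℝ)..(2 * π),
        (X.2 - r * Real.sin θ) *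
          (pdy εbar (γ θ) * (-(r * Real.sin θ)) - pdx εbar (γ θ) * (r * Real.cos θ)))
      = (∫ θ in (0:ℝ)..(2 * π), k * F' θ)
        + ∫ θ in (0:ℝ)..(2 * π), k * (pdy μ₁ (γ θ) * (r * Real.cos θ)) := by
    rw [← intervalIntegral.integral_add hi1 hi2]
    exact intervalIntegral.integral_congr fun θ _ => hinteq θ
  have hFTC : (∫ θ in (0:ℝ)..(2 * π), F' θ) = F (2 * π) - F 0 :=
    intervalIntegral.integral_eq_sub_of_hasDerivAt (fun θ _ => hFd θ)
      (hF'cont.intervalIntegrable 0 (2 * π))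
  have hF0 : F (2 * π) = F 0 := by
    rw [hF]
    have : γ (2 * π) = γ 0 := by rw [hγ, hγ]; simp
    simp only [hG, this]
    simp
  rw [hstep1, intervalIntegral.integral_const_mul, hFTC, hF0, sub_self, mul_zero, zero_add,
    intervalIntegral.integral_const_mul]
end

section
/- Let Ω ⊆ ℝ² be open, ν ≠ 1 a real constant, V : Ω → ℝ a C² function, μ₁, μ₂ : Ω → ℝ C³ functions, and σ̄ : Ω → ℝ a function satisfying σ̄ − V/(1−ν) = −(1/2) ∂μ₁/∂x = −(1/2) ∂μ₂/∂y and ∂μ₁/∂y + ∂μ₂/∂x = 0 on Ω. Then Δ(σ̄ − V/(1−ν)) = 0 on Ω; equivalently, Δσ̄ + (div b)/(1−ν) = 0 where b = −∇V. -/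
section helpers

variable {f g : ℝ × ℝ → ℝ} {p : ℝ × ℝ} {Ω : Set (ℝ × ℝ)}

private lemma pd_congr (hΩ : IsOpen Ω) (hp : p ∈ Ω) (h : ∀ q ∈ Ω, f q = g q) (v : ℝ × ℝ) :
    fderiv ℝ f p v = fderiv ℝ g p v := by
  have he : f =ᶠ[nhds p] g := by
    filter_upwards [hΩ.mem_nhds hp] with q hq using h q hq
  rw [he.fderiv_eq]

private lemma contDiffAt_pd {n m : WithTop ℕ∞} (hf : ContDiffAt ℝ n f p) (h : m + 1 ≤ n)
    (v : ℝ × ℝ) : ContDiffAt ℝ m (fun q => fderiv ℝ f q v) p :=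
  (ContinuousLinearMap.apply ℝ ℝ v).contDiff.contDiffAt.comp p (hf.fderiv_right h)

private lemma pd_swap (hf : ContDiffAt ℝ 2 f p) (v w : ℝ × ℝ) :
    fderiv ℝ (fun q => fderiv ℝ f q w) p v = fderiv ℝ (fun q => fderiv ℝ f q v) p w := by
  have hd : DifferentiableAt ℝ (fderiv ℝ f) p :=
    (hf.fderiv_right (m := 1) (by norm_num)).differentiableAt one_ne_zero
  have hsym := hf.isSymmSndFDerivAt (by simp)
  rw [fderiv_clm_apply hd (differentiableAt_const w),
      fderiv_clm_apply hd (differentiableAt_const v)]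
  simp [hsym.eq v w]

end helpers

/-- Euler–Lagrange conclusion (Eq. traceComp2b) of the body-force extension of the planar
trace principle: eliminating the Lagrange multiplier `μ` from
`σ̄ − V/(1−ν) = −(1/2)μ₁,x = −(1/2)μ₂,y`, `μ₁,y + μ₂,x = 0` shows that `σ̄ − V/(1−ν)`
is harmonic; equivalently `Δσ̄ + div b/(1−ν) = 0` with `b = −∇V`. -/
theorem stmt_16 (Ω : Set (ℝ × ℝ)) (hΩ : IsOpen Ω) (ν : ℝ) (hν : ν ≠ 1)
    (V : ℝ × ℝ → ℝ) (hV : ContDiffOn ℝ 2 V Ω)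
    (μ₁ μ₂ : ℝ × ℝ → ℝ) (hμ₁ : ContDiffOn ℝ 3 μ₁ Ω) (hμ₂ : ContDiffOn ℝ 3 μ₂ Ω)
    (σbar : ℝ × ℝ → ℝ)
    (h1 : ∀ p ∈ Ω, σbar p - V p / (1 - ν) = -(1 / 2) * pdx μ₁ p)
    (h2 : ∀ p ∈ Ω, σbar p - V p / (1 - ν) = -(1 / 2) * pdy μ₂ p)
    (h3 : ∀ p ∈ Ω, pdy μ₁ p + pdx μ₂ p = 0) :
    (∀ p ∈ Ω,
      pdx (pdx fun q => σbar q - V q / (1 - ν)) p +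
        pdy (pdy fun q => σbar q - V q / (1 - ν)) p = 0) ∧
    (∀ p ∈ Ω,
      pdx (pdx σbar) p + pdy (pdy σbar) p -
        (pdx (pdx V) p + pdy (pdy V) p) / (1 - ν) = 0) := by
  have hν' : (1 : ℝ) - ν ≠ 0 := sub_ne_zero.mpr (Ne.symm hν)
  simp only [pdx, pdy] at h1 h2 h3
  unfold pdx pdy
  set ex : ℝ × ℝ := (1, 0) with hex
  set ey : ℝ × ℝ := (0, 1) with hey
  set F : ℝ × ℝ → ℝ := fun q => σbar q - V q / (1 - ν) with hF
  -- pointwise smoothness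
  have hμ₁At : ∀ q ∈ Ω, ContDiffAt ℝ 3 μ₁ q := fun q hq => hμ₁.contDiffAt (hΩ.mem_nhds hq)
  have hμ₂At : ∀ q ∈ Ω, ContDiffAt ℝ 3 μ₂ q := fun q hq => hμ₂.contDiffAt (hΩ.mem_nhds hq)
  have hVAt : ∀ q ∈ Ω, ContDiffAt ℝ 2 V q := fun q hq => hV.contDiffAt (hΩ.mem_nhds hq)
  have hVd : ∀ q ∈ Ω, DifferentiableAt ℝ V q := fun q hq =>
    (hVAt q hq).differentiableAt two_ne_zero
  have hFAt : ∀ q ∈ Ω, ContDiffAt ℝ 2 F q := by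
    intro q hq
    have hg : ContDiffAt ℝ 2 (fun r => -(1 / 2) * fderiv ℝ μ₁ r ex) q :=
      contDiffAt_const.mul (contDiffAt_pd (hμ₁At q hq) (by norm_num) ex)
    apply hg.congr_of_eventuallyEq
    filter_upwards [hΩ.mem_nhds hq] with r hr using h1 r hr
  have hFd : ∀ q ∈ Ω, DifferentiableAt ℝ F q := fun q hq =>
    (hFAt q hq).differentiableAt two_ne_zero
  -- step A: ∂x F = (1/2) ∂y ∂y μ₁ on Ω
  have key : ∀ q ∈ Ω, fderiv ℝ F q ex = (1 / 2) * fderiv ℝ (fun r => fderiv ℝ μ₁ r ey) q ey := by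
    intro q hq
    have hμ₂2 : ContDiffAt ℝ 2 μ₂ q := (hμ₂At q hq).of_le (by norm_num)
    have hd2 : DifferentiableAt ℝ (fun r => fderiv ℝ μ₂ r ey) q :=
      (contDiffAt_pd (hμ₂At q hq) (m := 1) (by norm_num) ey).differentiableAt one_ne_zero
    calc fderiv ℝ F q ex
        = fderiv ℝ (fun r => -(1 / 2) * fderiv ℝ μ₂ r ey) q ex :=
          pd_congr hΩ hq (fun r hr => h2 r hr) ex
      _ = -(1 / 2) * fderiv ℝ (fun r => fderiv ℝ μ₂ r ey) q ex := by
          rw [fderiv_const_mul hd2]; simp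
      _ = -(1 / 2) * fderiv ℝ (fun r => fderiv ℝ μ₂ r ex) q ey := by
          rw [pd_swap hμ₂2]
      _ = -(1 / 2) * fderiv ℝ (fun r => -(fderiv ℝ μ₁ r ey)) q ey := by
          congr 1
          exact pd_congr hΩ hq (fun r hr => by linarith [h3 r hr]) ey
      _ = (1 / 2) * fderiv ℝ (fun r => fderiv ℝ μ₁ r ey) q ey := by
          rw [fderiv_fun_neg]; simp
  -- part 1
  have part1 : ∀ p ∈ Ω,
      fderiv ℝ (fun q => fderiv ℝ F q ex) p ex + fderiv ℝ (fun q => fderiv ℝ F q ey) p ey = 0 := by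
    intro p hp
    have hμ₁2 : ∀ q ∈ Ω, ContDiffAt ℝ 2 μ₁ q := fun q hq => (hμ₁At q hq).of_le (by norm_num)
    have hpdyμ₁ : ContDiffAt ℝ 2 (fun r => fderiv ℝ μ₁ r ey) p :=
      contDiffAt_pd (hμ₁At p hp) (by norm_num) ey
    have hd1 : DifferentiableAt ℝ (fun q => fderiv ℝ (fun r => fderiv ℝ μ₁ r ey) q ey) p :=
      (contDiffAt_pd hpdyμ₁ (m := 1) (by norm_num) ey).differentiableAt one_ne_zero
    have hdFy : DifferentiableAt ℝ (fun q => fderiv ℝ F q ey) p :=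
      (contDiffAt_pd (hFAt p hp) (m := 1) (by norm_num) ey).differentiableAt one_ne_zero
    have main : fderiv ℝ (fun q => fderiv ℝ F q ex) p ex
        = -(fderiv ℝ (fun q => fderiv ℝ F q ey) p ey) := by
      calc fderiv ℝ (fun q => fderiv ℝ F q ex) p ex
          = fderiv ℝ (fun q => (1 / 2) * fderiv ℝ (fun r => fderiv ℝ μ₁ r ey) q ey) p ex :=
            pd_congr hΩ hp key ex
        _ = (1 / 2) * fderiv ℝ (fun q => fderiv ℝ (fun r => fderiv ℝ μ₁ r ey) q ey) p ex := by
            rw [fderiv_const_mul hd1]; simp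
        _ = (1 / 2) * fderiv ℝ (fun q => fderiv ℝ (fun r => fderiv ℝ μ₁ r ey) q ex) p ey := by
            rw [pd_swap hpdyμ₁]
        _ = (1 / 2) * fderiv ℝ (fun q => fderiv ℝ (fun r => fderiv ℝ μ₁ r ex) q ey) p ey := by
            congr 1
            exact pd_congr hΩ hp (fun q hq => pd_swap (hμ₁2 q hq) ex ey) ey
        _ = (1 / 2) * fderiv ℝ (fun q => -2 * fderiv ℝ F q ey) p ey := by
            congr 1
            refine pd_congr hΩ hp (fun q hq => ?_) ey
            have hin : ∀ r ∈ Ω, fderiv ℝ μ₁ r ex = -2 * F r := by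
              intro r hr
              have := h1 r hr
              simp only [hF] at this ⊢
              linarith
            rw [pd_congr hΩ hq hin ey, fderiv_const_mul (hFd q hq)]
            simp
        _ = -(fderiv ℝ (fun q => fderiv ℝ F q ey) p ey) := by
            rw [fderiv_const_mul hdFy]; simp
    linarith [main]
  refine ⟨part1, ?_⟩
  -- part 2
  intro p hp
  have hσ : ∀ v : ℝ × ℝ, ∀ q ∈ Ω,
      fderiv ℝ σbar q v = fderiv ℝ F q v + fderiv ℝ V q v * (1 - ν)⁻¹ := by
    intro v q hq
    have hrw : σbar = fun r => F r + V r * (1 - ν)⁻¹ := by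
      funext r
      simp only [hF]
      rw [div_eq_mul_inv]
      ring
    rw [show fderiv ℝ σbar q = fderiv ℝ (fun r => F r + V r * (1 - ν)⁻¹) q by rw [← hrw]]
    rw [fderiv_fun_add (hFd q hq) ((hVd q hq).mul_const _), fderiv_mul_const (hVd q hq)]
    simp [mul_comm]
  have hdFx : DifferentiableAt ℝ (fun q => fderiv ℝ F q ex) p :=
    (contDiffAt_pd (hFAt p hp) (m := 1) (by norm_num) ex).differentiableAt one_ne_zero
  have hdFy : DifferentiableAt ℝ (fun q => fderiv ℝ F q ey) p :=
    (contDiffAt_pd (hFAt p hp) (m := 1) (by norm_num) ey).differentiableAt one_ne_zero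
  have hdVx : DifferentiableAt ℝ (fun q => fderiv ℝ V q ex) p :=
    (contDiffAt_pd (hVAt p hp) (m := 1) (by norm_num) ex).differentiableAt one_ne_zero
  have hdVy : DifferentiableAt ℝ (fun q => fderiv ℝ V q ey) p :=
    (contDiffAt_pd (hVAt p hp) (m := 1) (by norm_num) ey).differentiableAt one_ne_zero
  have e1 : fderiv ℝ (fun q => fderiv ℝ σbar q ex) p ex
      = fderiv ℝ (fun q => fderiv ℝ F q ex) p ex
        + fderiv ℝ (fun q => fderiv ℝ V q ex) p ex * (1 - ν)⁻¹ := by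
    rw [pd_congr hΩ hp (hσ ex) ex,
        fderiv_fun_add hdFx (hdVx.mul_const _), fderiv_mul_const hdVx]
    simp [mul_comm]
  have e2 : fderiv ℝ (fun q => fderiv ℝ σbar q ey) p ey
      = fderiv ℝ (fun q => fderiv ℝ F q ey) p ey
        + fderiv ℝ (fun q => fderiv ℝ V q ey) p ey * (1 - ν)⁻¹ := by
    rw [pd_congr hΩ hp (hσ ey) ey,
        fderiv_fun_add hdFy (hdVy.mul_const _), fderiv_mul_const hdVy]
    simp [mul_comm]
  have hp1 := part1 p hp
  rw [e1, e2, div_eq_mul_inv]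
  linear_combination hp1
end
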